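/- (Lemma on the recursion, part (ii).) Fix integers n > m ≥ 1. The set of λ ∈ ℝ with (1+λ)² ≠ 4 for which there exists z ∈ ℂ with R_m(z) ≠ 0, R_m(z) ∉ ℝ and R_n(z)/R_m(z) ∈ ℝ is finite. -/

import Mathlib

noncomputable section

/-- The linear polynomials `R_k(z)`: `R_0 = 1`, `R_1 = 1+λ+z`,
`R_{k+1} = (1+λ)R_k − R_{k−1}`, as functions of `z`. -/
def Rfun (lam : ℂ) : ℕ → ℂ → ℂ
  | 0, _ => 1
  | 1, z => 1 + lam + z
  | (k+2), z => (1 + lam) * Rfun lam (k+1) z - Rfun lam k z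

open Polynomial

/-- Constant-coefficient polynomials `A_k(λ)` with `R_k(z) = A_k + U_k z`. -/
def Apoly : ℕ → Polynomial ℝ
  | 0 => 1
  | 1 => 1 + X
  | (k+2) => (1 + X) * Apoly (k+1) - Apoly k

/-- `z`-coefficient polynomials `U_k(λ)` with `R_k(z) = A_k + U_k z`. -/
def Upoly : ℕ → Polynomial ℝ
  | 0 => 0
  | 1 => 1
  | (k+2) => (1 + X) * Upoly (k+1) - Upoly k

theorem Rfun_eq (lam z : ℂ) :
    ∀ k, Rfun lam k z = aeval lam (Apoly k) + aeval lam (Upoly k) * z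
  | 0 => by simp [Rfun, Apoly, Upoly]
  | 1 => by simp [Rfun, Apoly, Upoly]
  | (k+2) => by
      rw [Rfun, Rfun_eq lam z (k+1), Rfun_eq lam z k]
      simp only [Apoly, Upoly, map_sub, map_mul, map_add, map_one, aeval_X]
      ring

theorem wronskian_eq : ∀ m, Apoly m * Upoly (m+1) - Apoly (m+1) * Upoly m = 1
  | 0 => by simp [Apoly, Upoly]
  | (m+1) => by
      have h := wronskian_eq m
      show Apoly (m+1) * Upoly (m+2) - Apoly (m+2) * Upoly (m+1) = 1
      simp only [Apoly, Upoly]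
      linear_combination h

theorem key (m : ℕ) : ∀ j, Apoly m * Upoly (m+j) - Apoly (m+j) * Upoly m = Upoly j
  | 0 => by simp [Upoly]
  | 1 => by
      have h := wronskian_eq m
      simpa [Upoly] using h
  | (j+2) => by
      have h1 := key m (j+1)
      have h0 := key m j
      have e1 : m + (j+1) = (m+j)+1 := by omega
      have e2 : m + (j+2) = (m+j)+2 := by omega
      rw [e1] at h1
      rw [e2]
      show Apoly m * Upoly ((m+j)+2) - Apoly ((m+j)+2) * Upoly m = Upoly (j+2)
      simp only [Apoly, Upoly]
      linear_combination (1 + (X : Polynomial ℝ)) * h1 - h0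

theorem Upoly_eval_one : ∀ k, (Upoly k).eval 1 = k
  | 0 => by simp [Upoly]
  | 1 => by simp [Upoly]
  | (k+2) => by
      simp only [Upoly, eval_sub, eval_mul, eval_add, eval_one, eval_X,
        Upoly_eval_one (k+1), Upoly_eval_one k]
      push_cast
      ring

theorem Upoly_ne_zero {k : ℕ} (hk : 1 ≤ k) : Upoly k ≠ 0 := by
  intro h
  have := Upoly_eval_one k
  rw [h] at this
  simp only [eval_zero] at this
  have : (k : ℝ) = 0 := this.symm
  have := Nat.cast_eq_zero.mp this
  omega

/-- **Lemma on the recursion, part (ii).** Fix integers `n > m ≥ 1`.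
The set of real `λ` with `(1+λ)² ≠ 4` for which there exists `z ∈ ℂ` with
`R_m(z) ≠ 0`, `R_m(z) ∉ ℝ` and `R_n(z)/R_m(z) ∈ ℝ` is finite. -/
theorem statement9 (m n : ℕ) (hm : 1 ≤ m) (hmn : m < n) :
    {lam : ℝ | (1 + lam) ^ 2 ≠ 4 ∧
      ∃ z : ℂ, Rfun (lam : ℂ) m z ≠ 0 ∧ (Rfun (lam : ℂ) m z).im ≠ 0 ∧
        (Rfun (lam : ℂ) n z / Rfun (lam : ℂ) m z).im = 0}.Finite := by
  have hUnm : Upoly (n - m) ≠ 0 := Upoly_ne_zero (by omega)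
  apply Set.Finite.subset (Polynomial.finite_setOf_isRoot hUnm)
  rintro lam ⟨-, z, h0, h1, h2⟩
  -- abbreviations
  set a := (Apoly m).eval lam with ha
  set b := (Upoly m).eval lam with hb
  set c := (Apoly n).eval lam with hc
  set d := (Upoly n).eval lam with hd
  have coeval : ∀ p : Polynomial ℝ, aeval ((lam : ℂ)) p = ((p.eval lam : ℝ) : ℂ) := by
    intro p
    rw [show ((lam : ℝ) : ℂ) = algebraMap ℝ ℂ lam from rfl,
      aeval_algebraMap_apply_eq_algebraMap_eval]
    rfl
  have hRm : Rfun (lam : ℂ) m z = (a : ℂ) + (b : ℂ) * z := by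
    rw [Rfun_eq, coeval, coeval]
  have hRn : Rfun (lam : ℂ) n z = (c : ℂ) + (d : ℂ) * z := by
    rw [Rfun_eq, coeval, coeval]
  have him : (Rfun (lam : ℂ) m z).im = b * z.im := by
    rw [hRm]; simp
  rw [him] at h1
  have hzim : z.im ≠ 0 := fun h => h1 (by rw [h, mul_zero])
  -- from the real quotient condition, Im (Rn * conj Rm) = 0
  set w := Rfun (lam : ℂ) n z
  set v := Rfun (lam : ℂ) m z
  have hprod : (w * (starRingEnd ℂ) v).im = 0 := by
    have hv : w * (starRingEnd ℂ) v = (w / v) * (v * (starRingEnd ℂ) v) := by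
      field_simp
    rw [hv, Complex.mul_conj]
    simp [h2]
  have hexp : (w * (starRingEnd ℂ) v).im = (a * d - c * b) * z.im := by
    rw [hRm, hRn] at *
    simp [Complex.mul_im, Complex.mul_re, Complex.add_im, Complex.add_re]
    ring
  rw [hexp] at hprod
  have hD : a * d - c * b = 0 := by
    rcases mul_eq_zero.1 hprod with h | h
    · exact h
    · exact absurd h hzim
  -- conclude lam is a root of Upoly (n - m)
  have hkey := key m (n - m)
  rw [show m + (n - m) = n from by omega] at hkey
  show (Upoly (n - m)).IsRoot lam
  have := congrArg (Polynomial.eval lam) hkey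
  simp only [eval_sub, eval_mul] at this
  rw [Polynomial.IsRoot, ← this]
  rw [← ha, ← hb, ← hc, ← hd]
  linarith [hD]

end
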